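/- arXiv:2003.01292 — 3 statements merged into one kernel-verified Lean document; each statement's English description precedes it below -/
import Mathlib

section
/- Let m ≤ n and α_1, α_2, …, α_m ∈ Z_h^n. Then the m×n matrix whose rows are α_1,…,α_m has a right inverse if and only if α_1,…,α_m are linearly independent over Z_h (i.e., x_1α_1 + x_2α_2 + … + x_mα_m = 0 with x_i ∈ Z_h implies x_1 = x_2 = … = x_m = 0). -/
open scoped Matrix BigOperators

namespace Paper

def HasRightInv {R : Type*} [CommRing R] {m n : ℕ} (A : Matrix (Fin m) (Fin n) R) : Prop :=
  ∃ B : Matrix (Fin n) (Fin m) R, A * B = 1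

def rowSpace {R : Type*} [CommRing R] {m n : ℕ} (A : Matrix (Fin m) (Fin n) R) :
    Submodule R (Fin n → R) :=
  Submodule.span R (Set.range fun i => A i)

def IsSubspaceOfDim {R : Type*} [CommRing R] (n m : ℕ) (V : Submodule R (Fin n → R)) : Prop :=
  ∃ A : Matrix (Fin m) (Fin n) R, HasRightInv A ∧ rowSpace A = V

def Unimodular {R : Type*} [CommRing R] {m n : ℕ} (v : Fin m → Fin n → R) : Prop :=
  HasRightInv (Matrix.of v)

noncomputable def sdim {R : Type*} [CommRing R] {n : ℕ} (V : Submodule R (Fin n → R)) : ℕ :=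
  sSup {m | ∃ v : Fin m → Fin n → R, (∀ i, v i ∈ V) ∧ Unimodular v}

def minorsIdeal {R : Type*} [CommRing R] {m n : ℕ} (A : Matrix (Fin m) (Fin n) R) (k : ℕ) :
    Ideal R :=
  Ideal.span {d | ∃ (f : Fin k → Fin m) (g : Fin k → Fin n), d = (A.submatrix f g).det}

noncomputable def mccoyRank {R : Type*} [CommRing R] {m n : ℕ} (A : Matrix (Fin m) (Fin n) R) : ℕ :=
  sSup {k | ∀ x : R, (∀ y ∈ minorsIdeal A k, x * y = 0) → x = 0}

noncomputable def innerRank {R : Type*} [CommRing R] {m n : ℕ} (A : Matrix (Fin m) (Fin n) R) : ℕ :=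
  sInf {r | ∃ (B : Matrix (Fin m) (Fin r) R) (C : Matrix (Fin r) (Fin n) R), A = B * C}

noncomputable def joinDim {R : Type*} [CommRing R] {n : ℕ} (A B : Submodule R (Fin n → R)) : ℕ :=
  sInf {d | ∃ W : Submodule R (Fin n → R), IsSubspaceOfDim n d W ∧ A ≤ W ∧ B ≤ W}

def mapSub {R S : Type*} [CommRing R] [CommRing S] (f : R →+* S) {n : ℕ}
    (V : Submodule R (Fin n → R)) : Submodule S (Fin n → S) :=
  Submodule.span S ((fun v (j : Fin n) => f (v j)) '' (V : Set (Fin n → R)))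

def dualSub {R : Type*} [CommRing R] {n : ℕ} (V : Submodule R (Fin n → R)) :
    Submodule R (Fin n → R) where
  carrier := {y | ∀ x ∈ V, ∑ j, y j * x j = 0}
  add_mem' := by
    intro a b ha hb
    intro x hx
    have h1 : ∑ j, (a + b) j * x j = (∑ j, a j * x j) + ∑ j, b j * x j := by
      rw [← Finset.sum_add_distrib]
      exact Finset.sum_congr rfl fun j _ => by simp [add_mul]
    simp only [Set.mem_setOf_eq] at ha hb
    rw [h1, ha x hx, hb x hx, add_zero]
  zero_mem' := by
    intro x hx
    simp
  smul_mem' := by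
    intro c a ha
    intro x hx
    simp only [Set.mem_setOf_eq] at ha
    have h1 : ∑ j, (c • a) j * x j = c * ∑ j, a j * x j := by
      rw [Finset.mul_sum]
      exact Finset.sum_congr rfl fun j _ => by simp [mul_assoc]
    rw [h1, ha x hx, mul_zero]

def grassmannGraph (R : Type*) [CommRing R] (m n r : ℕ) :
    SimpleGraph {V : Submodule R (Fin n → R) // IsSubspaceOfDim n m V} where
  Adj A B := A ≠ B ∧ ((m : ℤ) - (r : ℤ) < (sdim (A.1 ⊓ B.1) : ℤ))
  symm := by
    refine ⟨?_⟩
    intro A B hAB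
    refine ⟨hAB.1.symm, ?_⟩
    rw [inf_comm]
    exact hAB.2
  loopless := by
    refine ⟨?_⟩
    intro A hA
    exact hA.1 rfl

noncomputable def cliqueNum {V : Type*} (G : SimpleGraph V) : ℕ :=
  sSup {c | ∃ S : Set V, G.IsClique S ∧ S.ncard = c}

noncomputable def indepNum {V : Type*} (G : SimpleGraph V) : ℕ :=
  sSup {c | ∃ S : Set V, (S.Pairwise fun a b => ¬ G.Adj a b) ∧ S.ncard = c}

noncomputable def gaussQ (q a b : ℕ) : ℚ :=
  ∏ j ∈ Finset.range b, ((q : ℚ) ^ (a - j) - 1) / ((q : ℚ) ^ (b - j) - 1)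


private lemma zmod_div_lemma (N : ℕ) [NeZero N] (a c : ZMod N)
    (H : ∀ x : ZMod N, x * a = 0 → x * c = 0) : ∃ e : ZMod N, c = e * a := by
  have hN : 0 < N := Nat.pos_of_ne_zero (NeZero.ne N)
  set A := a.val with hA
  set d := Nat.gcd A N with hd
  have hdN : d ∣ N := Nat.gcd_dvd_right A N
  have hdA : d ∣ A := Nat.gcd_dvd_left A N
  have hdpos : 0 < d := Nat.gcd_pos_of_pos_right A hN
  have hNd : 0 < N / d := Nat.div_pos (Nat.le_of_dvd hN hdN) hdpos
  have hcast : ((A : ℕ) : ZMod N) = a := ZMod.natCast_rightInverse a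
  have h1 : ((N / d : ℕ) : ZMod N) * a = 0 := by
    rw [← hcast, ← Nat.cast_mul, ZMod.natCast_eq_zero_iff]
    obtain ⟨A', hA'⟩ := hdA
    obtain ⟨N', hN'⟩ := hdN
    refine ⟨A', ?_⟩
    rw [hA', hN']
    simp only [Nat.mul_div_cancel_left _ hdpos]
    ring
  have h2 := H _ h1
  have hccast : ((c.val : ℕ) : ZMod N) = c := ZMod.natCast_rightInverse c
  have h3 : N ∣ (N / d) * c.val := by
    rw [← ZMod.natCast_eq_zero_iff, Nat.cast_mul, hccast]
    exact h2
  have h4 : d ∣ c.val := by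
    obtain ⟨k, hk⟩ := h3
    have hNk : N * k = N / d * (d * k) := by
      conv_lhs => rw [← Nat.div_mul_cancel hdN]
      ring
    rw [hNk] at hk
    exact ⟨k, Nat.eq_of_mul_eq_mul_left hNd hk⟩
  have hbez : ((d : ℤ) : ZMod N) = a * ((Nat.gcdA A N : ℤ) : ZMod N) := by
    rw [hd, Nat.gcd_eq_gcd_ab A N]
    push_cast
    rw [ZMod.natCast_self, hcast]
    ring
  have hdZ : ((d : ℕ) : ZMod N) = ((d : ℤ) : ZMod N) := by push_cast; ring
  have hfin : c = ((d : ℕ) : ZMod N) * ((c.val / d : ℕ) : ZMod N) := by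
    conv_lhs => rw [← hccast, ← Nat.mul_div_cancel' h4]
    rw [Nat.cast_mul]
  refine ⟨((Nat.gcdA A N : ℤ) : ZMod N) * ((c.val / d : ℕ) : ZMod N), ?_⟩
  calc c = ((d : ℕ) : ZMod N) * ((c.val / d : ℕ) : ZMod N) := hfin
    _ = (a * ((Nat.gcdA A N : ℤ) : ZMod N)) * ((c.val / d : ℕ) : ZMod N) := by
        rw [hdZ, hbez]
    _ = ((Nat.gcdA A N : ℤ) : ZMod N) * ((c.val / d : ℕ) : ZMod N) * a := by ring

private lemma zmod_baer (N : ℕ) [NeZero N] : Module.Baer (ZMod N) (ZMod N) := by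
  haveI : IsPrincipalIdealRing (ZMod N) :=
    IsPrincipalIdealRing.of_surjective (Int.castRingHom (ZMod N)) ZMod.intCast_surjective
  intro I g
  obtain ⟨a, ha⟩ : ∃ a, I = Ideal.span {a} := ⟨_, (Ideal.span_singleton_generator I).symm⟩
  have hmem : a ∈ I := ha ▸ Ideal.subset_span rfl
  set c := g ⟨a, hmem⟩ with hc
  have H : ∀ x : ZMod N, x * a = 0 → x * c = 0 := by
    intro x hx
    have h0 : x • (⟨a, hmem⟩ : I) = 0 := by
      apply Subtype.ext
      simpa [smul_eq_mul] using hx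
    calc x * c = x • g ⟨a, hmem⟩ := by rw [smul_eq_mul]
      _ = g (x • ⟨a, hmem⟩) := (map_smul g x _).symm
      _ = 0 := by rw [h0, map_zero]
  obtain ⟨e, he⟩ := zmod_div_lemma N a c H
  refine ⟨LinearMap.toSpanSingleton (ZMod N) (ZMod N) e, ?_⟩
  intro x mem
  obtain ⟨r, hr⟩ : ∃ r, r * a = x := Ideal.mem_span_singleton'.mp (ha ▸ mem)
  have hsub : (⟨x, mem⟩ : I) = r • ⟨a, hmem⟩ := Subtype.ext (by simp [smul_eq_mul, hr])
  rw [hsub, map_smul, LinearMap.toSpanSingleton_apply, ← hc]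
  rw [smul_eq_mul, smul_eq_mul, he, ← hr]
  ring

theorem stmt_3 (t : ℕ) (ht : 1 ≤ t) (p s : Fin t → ℕ)
    (hp : ∀ i, (p i).Prime) (hs : ∀ i, 1 ≤ s i) (hpinj : Function.Injective p)
    (h : ℕ) (hh : h = ∏ i, p i ^ s i)
    (m n : ℕ) (hmn : m ≤ n)
    (α : Fin m → Fin n → ZMod h) :
    HasRightInv (Matrix.of α) ↔
      ∀ x : Fin m → ZMod h, (∑ i, x i • α i) = 0 → ∀ i, x i = 0 := by
  have hh0 : h ≠ 0 := by
    rw [hh]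
    exact Finset.prod_ne_zero_iff.mpr fun i _ => pow_ne_zero _ (hp i).pos.ne'
  haveI : NeZero h := ⟨hh0⟩
  have hsum : ∀ x : Fin m → ZMod h, x ᵥ* (Matrix.of α) = ∑ i, x i • α i := by
    intro x
    funext j
    simp [Matrix.vecMul, dotProduct, Finset.sum_apply]
  constructor
  · rintro ⟨B, hB⟩ x hx i
    have hv : x ᵥ* (Matrix.of α) = 0 := by rw [hsum, hx]
    have hx0 : x = 0 := by
      calc x = x ᵥ* 1 := (Matrix.vecMul_one x).symm
        _ = x ᵥ* (Matrix.of α * B) := by rw [hB]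
        _ = (x ᵥ* Matrix.of α) ᵥ* B := (Matrix.vecMul_vecMul x _ B).symm
        _ = 0 := by rw [hv, Matrix.zero_vecMul]
    exact congrFun hx0 i
  · intro hli
    haveI : Module.Injective (ZMod h) (ZMod h) := (zmod_baer h).injective
    have hinj : Function.Injective (Matrix.of α).vecMulLinear := by
      rw [injective_iff_map_eq_zero]
      intro x hx0
      funext i
      have hv : ∑ i, x i • α i = 0 := by
        rw [← hsum]; exact hx0
      exact hli x hv i
    choose gs hgs using fun k : Fin m =>
      Module.Injective.out (Matrix.of α).vecMulLinear hinj (LinearMap.proj k)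
    refine ⟨Matrix.of (fun j k => gs k (Pi.single j 1)), ?_⟩
    ext i k
    have hrow : α i = (Matrix.of α).vecMulLinear (Pi.single i 1) := by
      show α i = Pi.single i 1 ᵥ* (Matrix.of α)
      rw [Matrix.single_one_vecMul]
      rfl
    have hdecomp : α i = ∑ j, α i j • (Pi.single j 1 : Fin n → ZMod h) := by
      funext j'
      simp [Pi.single_apply, Finset.sum_apply]
    have e1 : (Matrix.of α * Matrix.of fun j k => gs k (Pi.single j 1)) i k
        = gs k (α i) := by
      rw [Matrix.mul_apply]
      conv_rhs => rw [hdecomp]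
      rw [map_sum]
      simp [smul_eq_mul]
    rw [e1, hrow, hgs k]
    simp [Matrix.one_apply, Pi.single_apply, eq_comm]

end Paper
end

section
/- Let A and B be subspaces of Z_h^n. Then dim(A∩B) = min{dim(π_i(A) ∩ π_i(B)) : i = 1,…,t}, where A∩B is the intersection of the submodules A and B, and where on the right-hand side dim is the analogously defined dimension of a Z_{p_i^{s_i}}-submodule of Z_{p_i^{s_i}}^n. -/
open scoped Matrix BigOperators

namespace Paper

section Aux

variable {R : Type*} [CommRing R] {n : ℕ}

lemma unimodular_fin_zero (v : Fin 0 → Fin n → R) : Unimodular v :=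
  ⟨0, Subsingleton.elim _ _⟩

lemma unimodular_comp {m m' : ℕ} {v : Fin m' → Fin n → R} (hv : Unimodular v)
    (g : Fin m → Fin m') (hg : Function.Injective g) : Unimodular (v ∘ g) := by
  obtain ⟨B, hB⟩ := hv
  refine ⟨Matrix.of fun a b => B a (g b), ?_⟩
  ext a b
  have h1 : (Matrix.of v * B) (g a) (g b) = (1 : Matrix (Fin m') (Fin m') R) (g a) (g b) := by
    rw [hB]
  simp only [Matrix.mul_apply, Matrix.one_apply] at h1 ⊢
  simp only [Matrix.of_apply, Function.comp_apply] at h1 ⊢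
  rw [h1]
  simp [hg.eq_iff]

lemma unimodular_card_le {m : ℕ} [Fintype R] [Nontrivial R] [DecidableEq R]
    {v : Fin m → Fin n → R} (hv : Unimodular v) : m ≤ n := by
  obtain ⟨B, hB⟩ := hv
  have hinj : Function.Injective (fun x : Fin m → R => Matrix.vecMul x (Matrix.of v)) := by
    intro x y hxy
    have := congrArg (fun z => Matrix.vecMul z B) hxy
    simpa [Matrix.vecMul_vecMul, hB, Matrix.vecMul_one] using this
  have hcard := Fintype.card_le_of_injective _ hinj
  simp only [Fintype.card_fun, Fintype.card_fin] at hcard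
  exact (Nat.pow_le_pow_iff_right Fintype.one_lt_card).mp hcard

/-- The set whose sup is `sdim`. -/
def USet (V : Submodule R (Fin n → R)) : Set ℕ :=
  {m | ∃ v : Fin m → Fin n → R, (∀ i, v i ∈ V) ∧ Unimodular v}

lemma zero_mem_USet (V : Submodule R (Fin n → R)) : 0 ∈ USet V :=
  ⟨fun k => k.elim0, fun k => k.elim0, unimodular_fin_zero _⟩

lemma USet_bddAbove [Fintype R] [Nontrivial R] [DecidableEq R]
    (V : Submodule R (Fin n → R)) : BddAbove (USet V) :=
  ⟨n, fun _ hm => by obtain ⟨v, _, hv⟩ := hm; exact unimodular_card_le hv⟩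

lemma sdim_mem_USet [Fintype R] [Nontrivial R] [DecidableEq R]
    (V : Submodule R (Fin n → R)) : sdim V ∈ USet V :=
  Nat.sSup_mem ⟨0, zero_mem_USet V⟩ (USet_bddAbove V)

lemma le_sdim [Fintype R] [Nontrivial R] [DecidableEq R]
    {V : Submodule R (Fin n → R)} {m : ℕ} (hm : m ∈ USet V) : m ≤ sdim V :=
  le_csSup (USet_bddAbove V) hm

end Aux

section CRT

variable {R : Type*} [CommRing R] {n t : ℕ} {S : Fin t → Type*} [∀ i, CommRing (S i)]
  (f : ∀ i, R →+* S i)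

/-- two elements with equal images everywhere are equal -/
lemma crt_ext (hinj : ∀ x : R, (∀ i, f i x = 0) → x = 0)
    {x y : R} (hxy : ∀ i, f i x = f i y) : x = y := by
  have := hinj (x - y) (fun i => by rw [map_sub, hxy i, sub_self])
  exact sub_eq_zero.mp this

lemma exists_idem (hjs : ∀ g : ∀ i, S i, ∃ x : R, ∀ i, f i x = g i) :
    ∃ e : Fin t → R, ∀ i j, f i (e j) = if i = j then 1 else 0 := by
  choose x hx using fun j : Fin t => hjs (fun i => if i = j then 1 else 0)
  exact ⟨x, fun i j => hx j i⟩

lemma mem_mapSub {V : Submodule R (Fin n → R)} {w : Fin n → R} (hw : w ∈ V) (i : Fin t) :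
    (fun j => f i (w j)) ∈ mapSub (f i) V :=
  Submodule.subset_span ⟨w, hw, rfl⟩

lemma mapSub_elim (i : Fin t) (hsurj : Function.Surjective (f i))
    {V : Submodule R (Fin n → R)} {x : Fin n → S i} (hx : x ∈ mapSub (f i) V) :
    ∃ w ∈ V, x = fun j => f i (w j) := by
  let W : Submodule (S i) (Fin n → S i) :=
    { carrier := {x | ∃ w ∈ V, x = fun j => f i (w j)}
      zero_mem' := ⟨0, V.zero_mem, by funext j; simp⟩
      add_mem' := by
        rintro a b ⟨wa, hwa, rfl⟩ ⟨wb, hwb, rfl⟩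
        exact ⟨wa + wb, V.add_mem hwa hwb, by funext j; simp⟩
      smul_mem' := by
        rintro c a ⟨wa, hwa, rfl⟩
        obtain ⟨c', rfl⟩ := hsurj c
        exact ⟨c' • wa, V.smul_mem c' hwa, by funext j; simp⟩ }
  have : mapSub (f i) V ≤ W := by
    rw [mapSub, Submodule.span_le]
    rintro y ⟨w, hw, rfl⟩
    exact ⟨w, hw, rfl⟩
  exact this hx

lemma mapSub_mono (i : Fin t) {V W : Submodule R (Fin n → R)} (hVW : V ≤ W) :
    mapSub (f i) V ≤ mapSub (f i) W :=
  Submodule.span_mono (Set.image_mono hVW)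

lemma mapSub_inf (hinj : ∀ x : R, (∀ i, f i x = 0) → x = 0)
    (e : Fin t → R) (he : ∀ i j, f i (e j) = if i = j then 1 else 0)
    (i : Fin t) (hsurj : Function.Surjective (f i))
    (V W : Submodule R (Fin n → R)) :
    mapSub (f i) (V ⊓ W) = mapSub (f i) V ⊓ mapSub (f i) W := by
  refine le_antisymm (le_inf (mapSub_mono f i inf_le_left) (mapSub_mono f i inf_le_right)) ?_
  rintro x ⟨hxV, hxW⟩
  obtain ⟨a, haV, rfl⟩ := mapSub_elim f i hsurj hxV
  obtain ⟨b, hbW, hab⟩ := mapSub_elim f i hsurj hxW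
  have hkey : e i • a = e i • b := by
    funext j
    refine crt_ext f hinj (fun i' => ?_)
    have hj : f i (a j) = f i (b j) := congrFun hab j
    simp only [Pi.smul_apply, smul_eq_mul, map_mul, he]
    by_cases hii : i' = i
    · subst hii; simp [hj]
    · simp [hii]
  have hmem : e i • a ∈ V ⊓ W := by
    constructor
    · exact Submodule.smul_mem V _ haV
    · rw [hkey]; exact Submodule.smul_mem W _ hbW
  have := mem_mapSub f hmem i
  have heq : (fun j => f i ((e i • a) j)) = fun j => f i (a j) := by
    funext j
    simp [he]
  rwa [heq] at this

lemma unimodular_iff_forall (hinj : ∀ x : R, (∀ i, f i x = 0) → x = 0)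
    (hjs : ∀ g : ∀ i, S i, ∃ x : R, ∀ i, f i x = g i)
    {m : ℕ} (v : Fin m → Fin n → R) :
    Unimodular v ↔ ∀ i, Unimodular (fun k j => f i (v k j)) := by
  constructor
  · rintro ⟨B, hB⟩ i
    refine ⟨Matrix.of fun a b => f i (B a b), ?_⟩
    ext a b
    have h1 : f i ((Matrix.of v * B) a b) = f i ((1 : Matrix (Fin m) (Fin m) R) a b) := by
      rw [hB]
    simp only [Matrix.mul_apply, Matrix.one_apply, map_sum, map_mul, Matrix.of_apply] at h1 ⊢
    rw [h1]
    split <;> simp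
  · intro hi
    choose Bi hBi using fun i => hi i
    choose Bf hBf using fun a b => hjs (fun i => Bi i a b)
    refine ⟨Matrix.of Bf, ?_⟩
    ext a b
    refine crt_ext f hinj (fun i => ?_)
    have h1 : (Matrix.of (fun k j => f i (v k j)) * Bi i) a b
        = (1 : Matrix (Fin m) (Fin m) (S i)) a b := by rw [hBi]
    simp only [Matrix.mul_apply, Matrix.one_apply, Matrix.of_apply] at h1 ⊢
    rw [map_sum]
    simp only [map_mul, hBf]
    rw [h1]
    split <;> simp
end CRT

section SDim

variable {R : Type*} [CommRing R] {n t : ℕ} {S : Fin t → Type*} [∀ i, CommRing (S i)]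
  [Fintype R] [Nontrivial R] [DecidableEq R]
  [∀ i, Fintype (S i)] [∀ i, Nontrivial (S i)] [∀ i, DecidableEq (S i)]
  (f : ∀ i, R →+* S i)

lemma sdim_eq_iInf (ht : 0 < t)
    (hinj : ∀ x : R, (∀ i, f i x = 0) → x = 0)
    (hjs : ∀ g : ∀ i, S i, ∃ x : R, ∀ i, f i x = g i)
    (V : Submodule R (Fin n → R)) :
    sdim V = ⨅ i, sdim (mapSub (f i) V) := by
  have : Nonempty (Fin t) := ⟨⟨0, ht⟩⟩
  obtain ⟨e, he⟩ := exists_idem f hjs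
  refine le_antisymm (le_ciInf fun i => ?_) ?_
  · -- sdim V ≤ sdim (mapSub (f i) V)
    obtain ⟨v, hvV, hv⟩ := sdim_mem_USet V
    refine le_sdim ⟨fun k j => f i (v k j), fun k => mem_mapSub f (hvV k) i, ?_⟩
    exact ((unimodular_iff_forall f hinj hjs v).mp hv) i
  · -- ⨅ ≤ sdim V
    set m := ⨅ i, sdim (mapSub (f i) V) with hm
    have hmle : ∀ i, m ≤ sdim (mapSub (f i) V) := fun i =>
      ciInf_le (OrderBot.bddBelow _) i
    have hW : ∀ i : Fin t, ∃ u : Fin m → Fin n → S i,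
        (∀ k, u k ∈ mapSub (f i) V) ∧ Unimodular u := by
      intro i
      obtain ⟨w, hwV, hw⟩ := sdim_mem_USet (mapSub (f i) V)
      refine ⟨w ∘ Fin.castLE (hmle i), fun k => hwV _, ?_⟩
      exact unimodular_comp hw _ (Fin.castLE_injective _)
    choose u huV hu using hW
    have hsurj : ∀ i, Function.Surjective (f i) := by
      intro i c
      obtain ⟨x, hx⟩ := hjs (fun i' => if hc : i' = i then hc ▸ c else 0)
      exact ⟨x, by simpa using hx i⟩
    have ha : ∀ (i : Fin t) (k : Fin m), ∃ w ∈ V, u i k = fun j => f i (w j) :=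
      fun i k => mapSub_elim f i (hsurj i) (huV i k)
    choose a haV hau using ha
    set v : Fin m → Fin n → R := fun k => ∑ i, e i • a i k with hv
    have hvV : ∀ k, v k ∈ V := fun k =>
      Submodule.sum_mem V (fun i _ => Submodule.smul_mem V _ (haV i k))
    have hproj : ∀ i, (fun k j => f i (v k j)) = u i := by
      intro i
      funext k j
      simp only [hv, Finset.sum_apply, Pi.smul_apply, smul_eq_mul, map_sum, map_mul, he]
      rw [Finset.sum_eq_single i]
      · rw [if_pos rfl, one_mul, hau i k]
      · intro i' _ hii'
        rw [if_neg (Ne.symm hii'), zero_mul]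
      · intro habs; exact absurd (Finset.mem_univ i) habs
    refine le_sdim ⟨v, hvV, ?_⟩
    rw [unimodular_iff_forall f hinj hjs]
    intro i
    rw [hproj i]
    exact hu i

end SDim


theorem stmt_7 (t : ℕ) (ht : 1 ≤ t) (p s : Fin t → ℕ)
    (hp : ∀ i, (p i).Prime) (hs : ∀ i, 1 ≤ s i) (hpinj : Function.Injective p)
    (h : ℕ) (hh : h = ∏ i, p i ^ s i)
    (n : ℕ)
    (A B : Submodule (ZMod h) (Fin n → ZMod h))
    (hA : ∃ a, IsSubspaceOfDim n a A) (hB : ∃ b, IsSubspaceOfDim n b B) :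
    sdim (A ⊓ B) = ⨅ i : Fin t,
      sdim ((mapSub (ZMod.castHom (show p i ^ s i ∣ h by rw [hh]; exact Finset.dvd_prod_of_mem _ (Finset.mem_univ i)) (ZMod (p i ^ s i))) A) ⊓
            (mapSub (ZMod.castHom (show p i ^ s i ∣ h by rw [hh]; exact Finset.dvd_prod_of_mem _ (Finset.mem_univ i)) (ZMod (p i ^ s i))) B)) := by
  have hq1 : ∀ i, 1 < p i ^ s i := fun i =>
    Nat.one_lt_pow (Nat.one_le_iff_ne_zero.mp (hs i)) (hp i).one_lt
  haveI hqnz : ∀ i, NeZero (p i ^ s i) := fun i => ⟨by have := hq1 i; omega⟩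
  haveI hqf : ∀ i, Fact (1 < p i ^ s i) := fun i => ⟨hq1 i⟩
  have hh1 : 1 < h := by
    rw [hh]
    have i0 : Fin t := ⟨0, ht⟩
    calc 1 < p i0 ^ s i0 := hq1 i0
    _ ≤ ∏ i, p i ^ s i := Finset.single_le_prod' (fun i _ => Nat.one_le_iff_ne_zero.mpr (hqnz i).out) (Finset.mem_univ i0)
  haveI : NeZero h := ⟨by omega⟩
  haveI : Fact (1 < h) := ⟨hh1⟩
  set f : ∀ i : Fin t, ZMod h →+* ZMod (p i ^ s i) := fun i =>
    ZMod.castHom (show p i ^ s i ∣ h by rw [hh]; exact Finset.dvd_prod_of_mem _ (Finset.mem_univ i)) (ZMod (p i ^ s i)) with hf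
  have hco : ∀ i j, i ≠ j → Nat.Coprime (p i ^ s i) (p j ^ s j) := fun i j hij =>
    Nat.Coprime.pow _ _ ((Nat.coprime_primes (hp i) (hp j)).mpr fun hpp => hij (hpinj hpp))
  have hinj : ∀ x : ZMod h, (∀ i, f i x = 0) → x = 0 := by
    intro x hx
    have hval : ∀ i, p i ^ s i ∣ x.val := by
      intro i
      have h1 := hx i
      rw [← ZMod.natCast_zmod_val x, map_natCast] at h1
      exact (ZMod.natCast_eq_zero_iff _ _).mp h1
    have hdvd : (h : ℤ) ∣ (x.val : ℤ) := by
      have hcast : (h : ℤ) = ∏ i, ((p i ^ s i : ℕ) : ℤ) := by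
        rw [hh]; push_cast; ring
      rw [hcast]
      exact Fintype.prod_dvd_of_coprime
        (fun i j hij => (Nat.isCoprime_iff_coprime).mpr (hco i j hij))
        (fun i => Int.natCast_dvd_natCast.mpr (hval i))
    have : h ∣ x.val := Int.natCast_dvd_natCast.mp hdvd
    rw [← ZMod.natCast_zmod_val x]
    exact (ZMod.natCast_eq_zero_iff _ _).mpr this
  have hjs : ∀ g : ∀ i, ZMod (p i ^ s i), ∃ x : ZMod h, ∀ i, f i x = g i := by
    set φ : ZMod h →+* ∀ i, ZMod (p i ^ s i) := Pi.ringHom f with hφ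
    have φinj : Function.Injective φ := by
      intro x y hxy
      exact crt_ext f hinj (fun i => congrFun hxy i)
    have hcard : Fintype.card (ZMod h) = Fintype.card (∀ i, ZMod (p i ^ s i)) := by
      rw [ZMod.card, Fintype.card_pi]
      simp only [ZMod.card]
      exact hh
    have φbij : Function.Bijective φ :=
      (Fintype.bijective_iff_injective_and_card φ).mpr ⟨φinj, hcard⟩
    intro g
    obtain ⟨x, hx⟩ := φbij.2 g
    exact ⟨x, fun i => congrFun hx i⟩
  have hsurj : ∀ i, Function.Surjective (f i) := by
    intro i c
    obtain ⟨x, hx⟩ := hjs (fun i' => if hc : i' = i then hc ▸ c else 0)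
    exact ⟨x, by simpa using hx i⟩
  obtain ⟨e, he⟩ := exists_idem f hjs
  have main := sdim_eq_iInf f ht hinj hjs (A ⊓ B)
  rw [main]
  exact iInf_congr fun i => congrArg sdim (mapSub_inf f hinj e he i (hsurj i) A B)



end Paper
end

section
/- For 1 ≤ k < n, the number of k-subspaces of Z_h^n equals ∏_{i=1}^t p_i^{(s_i−1)k(n−k)} · [n choose k]_{p_i}, where [n choose k]_q = ∏_{j=0}^{k−1} (q^{n−j} − 1)/(q^{k−j} − 1) is the Gaussian binomial coefficient. -/
open scoped Matrix BigOperators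

set_option maxHeartbeats 1000000

namespace Paper

section CountAux

open Matrix

variable {R : Type*} [CommRing R]

lemma hasRightInv_mul {a b c : ℕ} {C : Matrix (Fin a) (Fin b) R} {A : Matrix (Fin b) (Fin c) R}
    (hC : HasRightInv C) (hA : HasRightInv A) : HasRightInv (C * A) := by
  obtain ⟨D, hD⟩ := hC
  obtain ⟨B, hB⟩ := hA
  exact ⟨B * D, by rw [Matrix.mul_assoc, ← Matrix.mul_assoc A, hB, Matrix.one_mul, hD]⟩

lemma row_mem_rowSpace {k n : ℕ} (A : Matrix (Fin k) (Fin n) R) (i : Fin k) :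
    A i ∈ rowSpace A :=
  Submodule.subset_span ⟨i, rfl⟩

lemma exists_factor {k k' n : ℕ} (A : Matrix (Fin k) (Fin n) R)
    (A' : Matrix (Fin k') (Fin n) R) (h : rowSpace A ≤ rowSpace A') :
    ∃ C : Matrix (Fin k) (Fin k') R, A = C * A' := by
  have hmem : ∀ i, A i ∈ Submodule.span R (Set.range fun j => A' j) :=
    fun i => h (row_mem_rowSpace A i)
  choose c hc using fun i => (Submodule.mem_span_range_iff_exists_fun R).1 (hmem i)
  refine ⟨Matrix.of c, ?_⟩
  ext i j
  have h2 := congrFun (hc i) j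
  simp only [Finset.sum_apply, Pi.smul_apply, smul_eq_mul] at h2
  rw [Matrix.mul_apply]
  exact h2.symm

lemma rowSpace_mul_le {k k' n : ℕ} (C : Matrix (Fin k') (Fin k) R)
    (A : Matrix (Fin k) (Fin n) R) : rowSpace (C * A) ≤ rowSpace A := by
  rw [rowSpace, Submodule.span_le]
  rintro _ ⟨i, rfl⟩
  refine (Submodule.mem_span_range_iff_exists_fun R).2 ⟨C i, ?_⟩
  ext j
  simp [Finset.sum_apply, Matrix.mul_apply]

lemma rowSpace_mul_of_hasRightInv {k n : ℕ} {C : Matrix (Fin k) (Fin k) R}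
    (A : Matrix (Fin k) (Fin n) R) (hC : HasRightInv C) :
    rowSpace (C * A) = rowSpace A := by
  obtain ⟨E, hE⟩ := hC
  have hEC : E * C = 1 := mul_eq_one_comm.1 hE
  refine le_antisymm (rowSpace_mul_le C A) ?_
  have : A = E * (C * A) := by rw [← Matrix.mul_assoc, hEC, Matrix.one_mul]
  conv_lhs => rw [this]
  exact rowSpace_mul_le E (C * A)

/-- Orbit counting: right-invertible matrices are subspaces times square right-invertibles. -/
lemma card_riv_eq (k n : ℕ) :
    Nat.card {A : Matrix (Fin k) (Fin n) R // HasRightInv A} =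
      Nat.card {V : Submodule R (Fin n → R) // IsSubspaceOfDim n k V} *
        Nat.card {C : Matrix (Fin k) (Fin k) R // HasRightInv C} := by
  classical
  rw [← Nat.card_prod]
  apply Nat.card_congr
  set S := {V : Submodule R (Fin n → R) // IsSubspaceOfDim n k V}
  have rep : ∀ V : S, {A : Matrix (Fin k) (Fin n) R // HasRightInv A ∧ rowSpace A = V.1} :=
    fun V => ⟨V.2.choose, V.2.choose_spec⟩
  have rinv : ∀ V : S, {B : Matrix (Fin n) (Fin k) R // (rep V).1 * B = 1} :=
    fun V => ⟨(rep V).2.1.choose, (rep V).2.1.choose_spec⟩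
  have hVA : ∀ A : {A : Matrix (Fin k) (Fin n) R // HasRightInv A},
      IsSubspaceOfDim n k (rowSpace A.1) := fun A => ⟨A.1, A.2, rfl⟩
  -- key factorization
  have hfac : ∀ (A : Matrix (Fin k) (Fin n) R) (V : S), HasRightInv A → rowSpace A = V.1 →
      A = (A * (rinv V).1) * (rep V).1 := by
    intro A V _ hrs
    obtain ⟨C, hC⟩ := exists_factor A (rep V).1 (le_of_eq (hrs.trans (rep V).2.2.symm))
    have : A * (rinv V).1 = C := by
      rw [hC, Matrix.mul_assoc, (rinv V).2, Matrix.mul_one]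
    rw [this, ← hC]
  refine ⟨fun A => ⟨⟨rowSpace A.1, hVA A⟩, ⟨A.1 * (rinv ⟨rowSpace A.1, hVA A⟩).1, ?_⟩⟩,
    fun VC => ⟨VC.2.1 * (rep VC.1).1, hasRightInv_mul VC.2.2 (rep VC.1).2.1⟩, ?_, ?_⟩
  · -- HasRightInv (A * rinv V)
    obtain ⟨B, hB⟩ := A.2
    refine ⟨(rep ⟨rowSpace A.1, hVA A⟩).1 * B, ?_⟩
    have hfa := hfac A.1 ⟨rowSpace A.1, hVA A⟩ A.2 rfl
    calc A.1 * (rinv ⟨rowSpace A.1, hVA A⟩).1 * ((rep ⟨rowSpace A.1, hVA A⟩).1 * B)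
        = (A.1 * (rinv ⟨rowSpace A.1, hVA A⟩).1 * (rep ⟨rowSpace A.1, hVA A⟩).1) * B :=
          (Matrix.mul_assoc _ _ _).symm
      _ = A.1 * B := by rw [← hfa]
      _ = 1 := hB
  · intro A
    apply Subtype.ext
    exact (hfac A.1 ⟨rowSpace A.1, hVA A⟩ A.2 rfl).symm
  · rintro ⟨V, C⟩
    have hrs : rowSpace (C.1 * (rep V).1) = V.1 := by
      rw [rowSpace_mul_of_hasRightInv _ C.2, (rep V).2.2]
    have hV : (⟨rowSpace (C.1 * (rep V).1),
        hVA ⟨C.1 * (rep V).1, hasRightInv_mul C.2 (rep V).2.1⟩⟩ : S) = V := Subtype.ext hrs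
    refine Prod.ext (by exact hV) ?_
    have key2 : ∀ W : S, W = V → C.1 * (rep V).1 * (rinv W).1 = C.1 := by
      intro W hW
      subst hW
      rw [Matrix.mul_assoc, (rinv W).2, Matrix.mul_one]
    exact Subtype.ext (key2 _ hV)

end CountAux
section Transport

open Matrix

variable {R S : Type*} [CommRing R] [CommRing S]

lemma HasRightInv.map {k n : ℕ} {A : Matrix (Fin k) (Fin n) R} (h : HasRightInv A)
    (f : R →+* S) : HasRightInv (A.map f) := by
  obtain ⟨B, hB⟩ := h
  exact ⟨B.map f, by rw [← Matrix.map_mul, hB, Matrix.map_one f (map_zero f) (map_one f)]⟩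

lemma card_riv_congr (e : R ≃+* S) (k n : ℕ) :
    Nat.card {A : Matrix (Fin k) (Fin n) R // HasRightInv A} =
      Nat.card {A : Matrix (Fin k) (Fin n) S // HasRightInv A} := by
  apply Nat.card_congr
  refine ⟨fun A => ⟨A.1.map (e : R →+* S), A.2.map _⟩,
    fun A => ⟨A.1.map (e.symm : S →+* R), A.2.map _⟩, fun A => ?_, fun A => ?_⟩ <;>
  · apply Subtype.ext
    simp only [Matrix.map_map]
    convert Matrix.map_id _
    ext x
    simp

lemma card_riv_pi {ι : Type*} [Fintype ι] (Rf : ι → Type*) [∀ i, CommRing (Rf i)] (k n : ℕ) :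
    Nat.card {A : Matrix (Fin k) (Fin n) (∀ i, Rf i) // HasRightInv A} =
      ∏ i, Nat.card {A : Matrix (Fin k) (Fin n) (Rf i) // HasRightInv A} := by
  classical
  rw [← Nat.card_pi]
  apply Nat.card_congr
  have glue : ∀ f : ∀ i, {A : Matrix (Fin k) (Fin n) (Rf i) // HasRightInv A},
      HasRightInv (Matrix.of fun a b i => (f i).1 a b) := by
    intro f
    choose B hB using fun i => (f i).2
    refine ⟨Matrix.of fun a b i => B i a b, ?_⟩
    ext a b i
    have h2 := congrFun (congrFun (hB i) a) b
    rw [Matrix.mul_apply] at h2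
    rw [Matrix.mul_apply, Finset.sum_apply]
    simp only [Pi.mul_apply, Matrix.of_apply]
    rw [h2, Matrix.one_apply, Matrix.one_apply, apply_ite (fun x : ∀ i, Rf i => x i)]
    split_ifs <;> simp
  refine ⟨fun A i => ⟨A.1.map (Pi.evalRingHom Rf i), A.2.map _⟩,
    fun f => ⟨Matrix.of fun a b i => (f i).1 a b, glue f⟩, fun A => ?_, fun f => ?_⟩
  · apply Subtype.ext
    ext a b
    rfl
  · funext i
    apply Subtype.ext
    ext a b
    rfl

end Transport
section Fiber

lemma card_preimage_mul {M N : Type*} [AddCommGroup M] [AddCommGroup N] (f : M →+ N)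
    (hf : Function.Surjective f) (T : Set N) :
    Nat.card {x : M // f x ∈ T} * Nat.card N = Nat.card {y : N // y ∈ T} * Nat.card M := by
  classical
  have sec : ∀ y : N, {x : M // f x = y} := fun y => ⟨(hf y).choose, (hf y).choose_spec⟩
  have key : ∀ T : Set N,
      Nat.card {x : M // f x ∈ T} = Nat.card {y : N // y ∈ T} * Nat.card {z : M // f z = 0} := by
    intro T
    rw [← Nat.card_prod]
    apply Nat.card_congr
    refine ⟨fun x => ⟨⟨f x.1, x.2⟩, ⟨x.1 - (sec (f x.1)).1, ?_⟩⟩,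
      fun yz => ⟨(sec yz.1.1).1 + yz.2.1, ?_⟩, fun x => ?_, fun yz => ?_⟩
    · rw [map_sub, (sec (f x.1)).2, sub_self]
    · rw [map_add, (sec yz.1.1).2, yz.2.2, add_zero]
      exact yz.1.2
    · apply Subtype.ext
      simp only
      rw [add_sub_cancel]
    · have h1 : f ((sec yz.1.1).1 + yz.2.1) = yz.1.1 := by
        rw [map_add, (sec yz.1.1).2, yz.2.2, add_zero]
      refine Prod.ext (Subtype.ext h1) (Subtype.ext ?_)
      simp only
      rw [h1, add_sub_cancel_left]
  have e1 : {x : M // f x ∈ (Set.univ : Set N)} ≃ M := Equiv.subtypeUnivEquiv fun x => trivial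
  have e2 : {y : N // y ∈ (Set.univ : Set N)} ≃ N := Equiv.subtypeUnivEquiv fun y => trivial
  have h1 : Nat.card M = Nat.card N * Nat.card {z : M // f z = 0} := by
    rw [← Nat.card_congr e1, ← Nat.card_congr e2]
    exact key Set.univ
  rw [key T, h1]
  ring

end Fiber
section ZModCount

open Matrix

variable {p s : ℕ}

lemma zmod_pow_castHom_surjective (hp : p.Prime) (hs : 1 ≤ s) :
    Function.Surjective (ZMod.castHom (dvd_pow_self p (Nat.one_le_iff_ne_zero.1 hs)) (ZMod p)) := by
  haveI : NeZero p := ⟨hp.pos.ne'⟩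
  intro y
  refine ⟨((y.val : ℕ) : ZMod (p ^ s)), ?_⟩
  rw [map_natCast]
  exact ZMod.natCast_rightInverse y

lemma zmod_pow_eq_mul_of_cast_eq_zero (hp : p.Prime) (hs : 1 ≤ s) (x : ZMod (p ^ s))
    (hx : ZMod.castHom (dvd_pow_self p (Nat.one_le_iff_ne_zero.1 hs)) (ZMod p) x = 0) :
    ∃ y : ZMod (p ^ s), x = (p : ZMod (p ^ s)) * y := by
  haveI : NeZero p := ⟨hp.pos.ne'⟩
  haveI : NeZero (p ^ s) := ⟨pow_ne_zero s hp.pos.ne'⟩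
  have hx2 : x = ((x.val : ℕ) : ZMod (p ^ s)) := (ZMod.natCast_rightInverse x).symm
  rw [hx2, map_natCast] at hx
  obtain ⟨c, hc⟩ := (ZMod.natCast_eq_zero_iff _ _).1 hx
  exact ⟨(c : ZMod (p ^ s)), by rw [hx2, hc, Nat.cast_mul]⟩

lemma hasRightInv_iff_map {k n : ℕ} (hp : p.Prime) (hs : 1 ≤ s)
    (A : Matrix (Fin k) (Fin n) (ZMod (p ^ s))) :
    HasRightInv A ↔
      HasRightInv (A.map (ZMod.castHom (dvd_pow_self p (Nat.one_le_iff_ne_zero.1 hs)) (ZMod p))) := by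
  set π := ZMod.castHom (dvd_pow_self p (Nat.one_le_iff_ne_zero.1 hs)) (ZMod p) with hπ
  refine ⟨fun h => h.map π, fun h => ?_⟩
  obtain ⟨B', hB'⟩ := h
  have hsurj := zmod_pow_castHom_surjective hp hs
  -- lift B'
  have hlift : ∀ a b, ∃ x, π x = B' a b := fun a b => hsurj (B' a b)
  choose B hB using hlift
  have hmapB : (Matrix.of B).map π = B' := by ext a b; exact hB a b
  have h1 : (A * Matrix.of B).map π = 1 := by
    rw [Matrix.map_mul, hmapB, hB']
  -- entries of A*B - 1 are divisible by p
  have h2 : ∀ a b, ∃ y, (A * Matrix.of B - 1 : Matrix (Fin k) (Fin k) (ZMod (p ^ s))) a b = (p : ZMod (p ^ s)) * y := by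
    intro a b
    apply zmod_pow_eq_mul_of_cast_eq_zero hp hs
    have h4 := congrFun (congrFun h1 a) b
    simp only [Matrix.map_apply] at h4
    rw [Matrix.sub_apply, map_sub, h4, Matrix.one_apply, Matrix.one_apply,
      apply_ite (fun x : ZMod (p ^ s) => π x)]
    split_ifs <;> simp
  choose N' hN' using fun ab : Fin k × Fin k => h2 ab.1 ab.2
  have hN : A * Matrix.of B - 1 = (p : ZMod (p ^ s)) • Matrix.of (fun a b => N' (a, b)) := by
    ext a b
    rw [Matrix.smul_apply, Matrix.of_apply, smul_eq_mul]
    exact hN' (a, b)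
  have hnil : IsNilpotent (A * Matrix.of B - 1) := by
    refine ⟨s, ?_⟩
    rw [hN, smul_pow, ← Nat.cast_pow, ZMod.natCast_self, zero_smul]
  have hunit : IsUnit (A * Matrix.of B) := by
    have := hnil.isUnit_one_add
    rwa [add_sub_cancel] at this
  obtain ⟨C, hC⟩ := hunit.exists_right_inv
  exact ⟨Matrix.of B * C, by rw [← Matrix.mul_assoc, hC]⟩

end ZModCount

section FieldCount

open Matrix Module

lemma card_riv_zmod_prime {p : ℕ} (hp : p.Prime) {k n : ℕ} (hkn : k ≤ n) :
    Nat.card {A : Matrix (Fin k) (Fin n) (ZMod p) // HasRightInv A} =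
      ∏ j : Fin k, (p ^ n - p ^ (j : ℕ)) := by
  haveI : Fact p.Prime := ⟨hp⟩
  have hiff : ∀ A : Matrix (Fin k) (Fin n) (ZMod p),
      HasRightInv A ↔ LinearIndependent (ZMod p) (fun i => A i) := by
    intro A
    have estep : HasRightInv A ↔ Function.Surjective A.mulVec :=
      Matrix.mulVec_surjective_iff_exists_right_inverse.symm
    rw [estep, show (fun i => A i) = A.row from rfl, ← Matrix.vecMul_injective_iff (M := A)]
    have e1 : Function.Surjective A.mulVec ↔ A.rank = k := by
      rw [show A.mulVec = ⇑A.mulVecLin from rfl, ← LinearMap.range_eq_top]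
      constructor
      · intro hr
        rw [Matrix.rank, hr, finrank_top, Module.finrank_pi, Fintype.card_fin]
      · intro hr
        apply Submodule.eq_top_of_finrank_eq
        rw [Module.finrank_pi, Fintype.card_fin]
        exact hr
    have e2 : Function.Injective A.vecMul ↔ Aᵀ.rank = k := by
      rw [show A.vecMul = ⇑(Aᵀ.mulVecLin) from by rw [Matrix.mulVecLin_transpose]; rfl,
        ← LinearMap.ker_eq_bot]
      have hm := LinearMap.finrank_range_add_finrank_ker (Aᵀ.mulVecLin)
      rw [Module.finrank_pi, Fintype.card_fin] at hm
      have hdef : Aᵀ.rank = finrank (ZMod p) (LinearMap.range Aᵀ.mulVecLin) := rfl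
      constructor
      · intro hker
        rw [hker, finrank_bot, add_zero] at hm
        rw [hdef]; exact hm
      · intro hr
        rw [hdef] at hr
        have h0 : finrank (ZMod p) (LinearMap.ker Aᵀ.mulVecLin) = 0 := by omega
        exact Submodule.finrank_eq_zero.1 h0
    rw [e1, e2, Matrix.rank_transpose]
  haveI : NeZero p := ⟨hp.pos.ne'⟩
  have hE : {A : Matrix (Fin k) (Fin n) (ZMod p) // HasRightInv A} ≃
      {s : Fin k → (Fin n → ZMod p) // LinearIndependent (ZMod p) s} :=
    ⟨fun A => ⟨A.1, (hiff A.1).1 A.2⟩, fun v => ⟨v.1, (hiff v.1).2 v.2⟩,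
      fun _ => rfl, fun _ => rfl⟩
  rw [Nat.card_congr hE]
  have hfr : k ≤ finrank (ZMod p) (Fin n → ZMod p) := by
    rw [Module.finrank_pi, Fintype.card_fin]; exact hkn
  have := card_linearIndependent (K := ZMod p) (V := Fin n → ZMod p) hfr
  rwa [ZMod.card, Module.finrank_pi, Fintype.card_fin] at this

lemma card_riv_zmod_pow {p s : ℕ} (hp : p.Prime) (hs : 1 ≤ s) {k n : ℕ} (hkn : k ≤ n) :
    Nat.card {A : Matrix (Fin k) (Fin n) (ZMod (p ^ s)) // HasRightInv A} =
      (∏ j : Fin k, (p ^ n - p ^ (j : ℕ))) * p ^ ((s - 1) * (k * n)) := by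
  classical
  haveI : NeZero p := ⟨hp.pos.ne'⟩
  haveI : NeZero (p ^ s) := ⟨pow_ne_zero s hp.pos.ne'⟩
  set π := ZMod.castHom (dvd_pow_self p (Nat.one_le_iff_ne_zero.1 hs)) (ZMod p) with hπ
  let F : Matrix (Fin k) (Fin n) (ZMod (p ^ s)) →+ Matrix (Fin k) (Fin n) (ZMod p) :=
    { toFun := fun A => A.map π
      map_zero' := Matrix.map_zero π (map_zero π)
      map_add' := fun A B => Matrix.map_add π (fun a b => map_add π a b) A B }
  have hFsurj : Function.Surjective F := by
    intro Y
    choose g hg using fun ab : Fin k × Fin n => zmod_pow_castHom_surjective hp hs (Y ab.1 ab.2)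
    exact ⟨Matrix.of fun a b => g (a, b), by ext a b; exact hg (a, b)⟩
  have key := card_preimage_mul F hFsurj {Y | HasRightInv Y}
  have h1 : Nat.card {x : Matrix (Fin k) (Fin n) (ZMod (p ^ s)) // F x ∈ {Y | HasRightInv Y}} =
      Nat.card {A : Matrix (Fin k) (Fin n) (ZMod (p ^ s)) // HasRightInv A} :=
    Nat.card_congr (Equiv.subtypeEquivRight fun A => (hasRightInv_iff_map hp hs A).symm)
  have h2 : Nat.card {y : Matrix (Fin k) (Fin n) (ZMod p) // y ∈ {Y | HasRightInv Y}} =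
      ∏ j : Fin k, (p ^ n - p ^ (j : ℕ)) := card_riv_zmod_prime hp hkn
  have hcM : Nat.card (Matrix (Fin k) (Fin n) (ZMod (p ^ s))) = (p ^ s) ^ (k * n) := by
    have h0 : Nat.card (Matrix (Fin k) (Fin n) (ZMod (p ^ s)))
        = Nat.card (Fin k → Fin n → ZMod (p ^ s)) := rfl
    rw [h0, Nat.card_fun, Nat.card_fun, Nat.card_zmod, Nat.card_eq_fintype_card,
      Fintype.card_fin, Nat.card_eq_fintype_card, Fintype.card_fin, ← pow_mul, mul_comm n k]
  have hcN : Nat.card (Matrix (Fin k) (Fin n) (ZMod p)) = p ^ (k * n) := by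
    have h0 : Nat.card (Matrix (Fin k) (Fin n) (ZMod p))
        = Nat.card (Fin k → Fin n → ZMod p) := rfl
    rw [h0, Nat.card_fun, Nat.card_fun, Nat.card_zmod, Nat.card_eq_fintype_card,
      Fintype.card_fin, Nat.card_eq_fintype_card, Fintype.card_fin, ← pow_mul, mul_comm n k]
  rw [h1, h2, hcM, hcN] at key
  have hps : (p ^ s) ^ (k * n) = p ^ ((s - 1) * (k * n)) * p ^ (k * n) := by
    rw [← pow_mul, ← pow_add]
    congr 1
    have h3 : (s - 1) * (k * n) + k * n = ((s - 1) + 1) * (k * n) := by ring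
    rw [h3, Nat.sub_add_cancel hs]
  rw [hps, ← mul_assoc] at key
  exact Nat.eq_of_mul_eq_mul_right (pow_pos hp.pos (k * n)) key

end FieldCount


lemma factor_eq {q σ n k : ℕ} (hq : q.Prime) (hσ : 1 ≤ σ) (hk : 1 ≤ k) (hkn : k < n) :
    ((((∏ j : Fin k, (q ^ n - q ^ (j : ℕ))) * q ^ ((σ - 1) * (k * n)) : ℕ) : ℚ)) =
      (q : ℚ) ^ ((σ - 1) * k * (n - k)) * gaussQ q n k *
        (((∏ j : Fin k, (q ^ k - q ^ (j : ℕ))) * q ^ ((σ - 1) * (k * k)) : ℕ) : ℚ) := by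
  have hq1 : (1 : ℚ) < (q : ℚ) := by exact_mod_cast hq.one_lt
  have c1 : (((∏ j : Fin k, (q ^ n - q ^ (j : ℕ))) : ℕ) : ℚ)
      = ∏ j : Fin k, ((q : ℚ) ^ n - (q : ℚ) ^ (j : ℕ)) := by
    rw [Nat.cast_prod]
    refine Finset.prod_congr rfl fun j _ => ?_
    rw [Nat.cast_sub (Nat.pow_le_pow_right hq.pos (le_of_lt (lt_of_lt_of_le j.2 hkn.le)))]
    push_cast; ring
  have c2 : (((∏ j : Fin k, (q ^ k - q ^ (j : ℕ))) : ℕ) : ℚ)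
      = ∏ j : Fin k, ((q : ℚ) ^ k - (q : ℚ) ^ (j : ℕ)) := by
    rw [Nat.cast_prod]
    refine Finset.prod_congr rfl fun j _ => ?_
    rw [Nat.cast_sub (Nat.pow_le_pow_right hq.pos (le_of_lt j.2))]
    push_cast; ring
  have hgauss : ∏ j : Fin k, ((q : ℚ) ^ n - (q : ℚ) ^ (j : ℕ))
      = gaussQ q n k * ∏ j : Fin k, ((q : ℚ) ^ k - (q : ℚ) ^ (j : ℕ)) := by
    rw [gaussQ, Fin.prod_univ_eq_prod_range (fun j => (q : ℚ) ^ n - (q : ℚ) ^ j) k,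
      Fin.prod_univ_eq_prod_range (fun j => (q : ℚ) ^ k - (q : ℚ) ^ j) k,
      ← Finset.prod_mul_distrib]
    refine Finset.prod_congr rfl fun j hj => ?_
    have hjk : j < k := Finset.mem_range.1 hj
    have hkj : (q : ℚ) ^ k - (q : ℚ) ^ j = (q : ℚ) ^ j * ((q : ℚ) ^ (k - j) - 1) := by
      rw [mul_sub, mul_one, ← pow_add, Nat.add_sub_cancel' hjk.le]
    have hnj : (q : ℚ) ^ n - (q : ℚ) ^ j = (q : ℚ) ^ j * ((q : ℚ) ^ (n - j) - 1) := by
      rw [mul_sub, mul_one, ← pow_add,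
        Nat.add_sub_cancel' (le_of_lt (lt_of_lt_of_le hjk hkn.le))]
    have hne : ((q : ℚ) ^ (k - j) - 1) ≠ 0 :=
      sub_ne_zero.2 (one_lt_pow₀ hq1 (by omega)).ne'
    rw [hnj, hkj]
    field_simp
  have he : (σ - 1) * (k * n) = (σ - 1) * k * (n - k) + (σ - 1) * (k * k) := by
    have h5 : k * n = k * (n - k) + k * k := by
      rw [← Nat.mul_add, Nat.sub_add_cancel hkn.le]
    rw [h5]; ring
  rw [Nat.cast_mul, Nat.cast_mul, c1, c2, Nat.cast_pow, Nat.cast_pow, hgauss, he, pow_add]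
  push_cast
  ring

theorem stmt_8 (t : ℕ) (ht : 1 ≤ t) (p s : Fin t → ℕ)
    (hp : ∀ i, (p i).Prime) (hs : ∀ i, 1 ≤ s i) (hpinj : Function.Injective p)
    (h : ℕ) (hh : h = ∏ i, p i ^ s i)
    (n k : ℕ) (hk : 1 ≤ k) (hkn : k < n) :
    (({V : Submodule (ZMod h) (Fin n → ZMod h) | IsSubspaceOfDim n k V}.ncard : ℚ)) =
      ∏ i, (p i : ℚ) ^ ((s i - 1) * k * (n - k)) * gaussQ (p i) n k := by
  classical
  subst hh
  haveI : NeZero (∏ i, p i ^ s i) :=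
    ⟨Finset.prod_ne_zero_iff.2 fun i _ => pow_ne_zero _ (hp i).pos.ne'⟩
  have hco : Pairwise (Function.onFun Nat.Coprime fun i => p i ^ s i) := by
    intro i j hij
    show Nat.Coprime (p i ^ s i) (p j ^ s j)
    exact Nat.Coprime.pow (s i) (s j) ((Nat.coprime_primes (hp i) (hp j)).2 fun hEq => hij (hpinj hEq))
  have hcrt : ∀ a b : ℕ,
      Nat.card {A : Matrix (Fin a) (Fin b) (ZMod (∏ i, p i ^ s i)) // HasRightInv A} =
        ∏ i, Nat.card {A : Matrix (Fin a) (Fin b) (ZMod (p i ^ s i)) // HasRightInv A} :=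
    fun a b => by rw [card_riv_congr (ZMod.prodEquivPi _ hco) a b, card_riv_pi]
  have horb := card_riv_eq (R := ZMod (∏ i, p i ^ s i)) k n
  -- identify ncard with Nat.card of subtype
  have hncard : ({V : Submodule (ZMod (∏ i, p i ^ s i)) (Fin n → ZMod (∏ i, p i ^ s i)) |
      IsSubspaceOfDim n k V}.ncard) =
      Nat.card {V : Submodule (ZMod (∏ i, p i ^ s i)) (Fin n → ZMod (∏ i, p i ^ s i)) //
        IsSubspaceOfDim n k V} := (Nat.card_coe_set_eq _).symm
  -- nonzero denominator
  have hGpos : 0 < Nat.card {C : Matrix (Fin k) (Fin k) (ZMod (∏ i, p i ^ s i)) //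
      HasRightInv C} := by
    haveI : Nonempty {C : Matrix (Fin k) (Fin k) (ZMod (∏ i, p i ^ s i)) // HasRightInv C} :=
      ⟨⟨1, ⟨1, one_mul 1⟩⟩⟩
    exact Nat.card_pos
  -- per-prime counts
  have hNn : ∀ i : Fin t,
      Nat.card {A : Matrix (Fin k) (Fin n) (ZMod (p i ^ s i)) // HasRightInv A} =
        (∏ j : Fin k, (p i ^ n - p i ^ (j : ℕ))) * p i ^ ((s i - 1) * (k * n)) :=
    fun i => card_riv_zmod_pow (hp i) (hs i) hkn.le
  have hNk : ∀ i : Fin t,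
      Nat.card {A : Matrix (Fin k) (Fin k) (ZMod (p i ^ s i)) // HasRightInv A} =
        (∏ j : Fin k, (p i ^ k - p i ^ (j : ℕ))) * p i ^ ((s i - 1) * (k * k)) :=
    fun i => card_riv_zmod_pow (hp i) (hs i) le_rfl
  -- pass to ℚ
  rw [hncard]
  have hGne : ((Nat.card {C : Matrix (Fin k) (Fin k) (ZMod (∏ i, p i ^ s i)) //
      HasRightInv C} : ℚ)) ≠ 0 := by
    exact_mod_cast hGpos.ne'
  apply mul_right_cancel₀ hGne
  have horbQ : ((Nat.card {A : Matrix (Fin k) (Fin n) (ZMod (∏ i, p i ^ s i)) //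
      HasRightInv A} : ℚ)) =
      (Nat.card {V : Submodule (ZMod (∏ i, p i ^ s i)) (Fin n → ZMod (∏ i, p i ^ s i)) //
        IsSubspaceOfDim n k V} : ℚ) *
      (Nat.card {C : Matrix (Fin k) (Fin k) (ZMod (∏ i, p i ^ s i)) // HasRightInv C} : ℚ) := by
    exact_mod_cast congrArg (Nat.cast : ℕ → ℚ) horb
  rw [← horbQ]
  have hn' : ((Nat.card {A : Matrix (Fin k) (Fin n) (ZMod (∏ i, p i ^ s i)) //
      HasRightInv A} : ℚ)) = ∏ i, ((Nat.card {A : Matrix (Fin k) (Fin n) (ZMod (p i ^ s i)) //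
      HasRightInv A} : ℚ)) := by rw [hcrt k n]; push_cast; rfl
  have hk' : ((Nat.card {C : Matrix (Fin k) (Fin k) (ZMod (∏ i, p i ^ s i)) //
      HasRightInv C} : ℚ)) = ∏ i, ((Nat.card {A : Matrix (Fin k) (Fin k) (ZMod (p i ^ s i)) //
      HasRightInv A} : ℚ)) := by rw [hcrt k k]; push_cast; rfl
  rw [hn', hk', ← Finset.prod_mul_distrib]
  refine Finset.prod_congr rfl fun i _ => ?_
  rw [hNn i, hNk i]
  exact factor_eq (hp i) (hs i) hk hkn


end Paper
end
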